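/- Let n ≥ 1 be an integer and let (α,β,u,v) ∈ V_n^4 be such that the Wang tile with right label α, top label β, left label u and bottom label v belongs to T'_n. Then there exists exactly one valid rectangular pattern over T'_n whose right, top, left and bottom label words are respectively τ_n(α), τ_n(β), τ_n(u) and τ_n(v). -/

import Mathlib

structure WangTile (C : Type*) where
  right : C
  top : C
  left : C
  bottom : C
deriving DecidableEq

abbrev Lbl : Type := ℤ × ℤ × ℤ

def Vn (n : ℤ) : Set Lbl :=
  {v | 0 ≤ v.1 ∧ v.1 ≤ v.2.1 ∧ v.2.1 ≤ 1 ∧ v.2.1 ≤ v.2.2 ∧ v.2.2 ≤ n + 1}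

def hatT {C : Type*} (t : WangTile C) : WangTile C :=
  ⟨t.top, t.right, t.bottom, t.left⟩

def whiteTiles (n : ℤ) : Set (WangTile Lbl) :=
  {t | ∃ i j : ℤ, 1 ≤ i ∧ i ≤ n ∧ 1 ≤ j ∧ j ≤ n ∧
    t = ⟨(1, 1, i + 1), (1, 1, j + 1), (1, 1, i), (1, 1, j)⟩}

def blueH (n : ℤ) : Set (WangTile Lbl) :=
  {t | ∃ i : ℤ, 0 ≤ i ∧ i ≤ n ∧ t = ⟨(0, 0, i + 1), (1, 1, 1), (0, 0, i), (1, 1, n)⟩}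

def greenH (n : ℤ) : Set (WangTile Lbl) :=
  {t | ∃ i : ℤ, 0 ≤ i ∧ i ≤ n ∧ t = ⟨(0, 1, i + 1), (1, 1, 1), (0, 0, i), (1, 1, n + 1)⟩}

def yellowH (n : ℤ) : Set (WangTile Lbl) :=
  {t | ∃ i : ℤ, 1 ≤ i ∧ i ≤ n ∧ t = ⟨(0, 1, i + 1), (1, 1, 2), (0, 1, i), (1, 1, n + 1)⟩}

def antiH (n : ℤ) : Set (WangTile Lbl) :=
  {t | ∃ i : ℤ, 1 ≤ i ∧ i ≤ n ∧ t = ⟨(0, 0, i + 1), (1, 1, 2), (0, 1, i), (1, 1, n)⟩}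

def junctionTile (n k l r s : ℤ) : WangTile Lbl :=
  ⟨(0, k, l), (0, r, s), (0, s, r + n), (0, l, k + n)⟩

def jPairs : Set (ℤ × ℤ) := {(0, 0), (0, 1), (1, 1)}

def junctions (n : ℤ) : Set (WangTile Lbl) :=
  {t | ∃ k l r s : ℤ, (k, l) ∈ jPairs ∧ (r, s) ∈ jPairs ∧ t = junctionTile n k l r s}

def Text (n : ℤ) : Set (WangTile Lbl) :=
  whiteTiles n ∪ blueH n ∪ greenH n ∪ yellowH n ∪ antiH n ∪
    hatT '' blueH n ∪ hatT '' greenH n ∪ hatT '' yellowH n ∪ hatT '' antiH n ∪ junctions n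

def Dset (n : ℤ) : Set (WangTile Lbl) :=
  {(⟨(0, 0, n + 1), (1, 1, 1), (0, 0, n), (1, 1, n)⟩ : WangTile Lbl),
    hatT (⟨(0, 0, n + 1), (1, 1, 1), (0, 0, n), (1, 1, n)⟩ : WangTile Lbl),
    junctionTile n 0 0 1 1, junctionTile n 1 1 0 0}

def Tmet (n : ℤ) : Set (WangTile Lbl) :=
  Text n \ (antiH n ∪ hatT '' antiH n ∪ Dset n)

def ValidConfig {C : Type*} (T : Set (WangTile C)) (x : ℤ × ℤ → WangTile C) : Prop :=
  (∀ m, x m ∈ T) ∧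
    (∀ m : ℤ × ℤ, (x m).right = (x (m.1 + 1, m.2)).left) ∧
    (∀ m : ℤ × ℤ, (x m).top = (x (m.1, m.2 + 1)).bottom)

def ValidPattern {C : Type*} (T : Set (WangTile C)) (w h : ℕ) (p : ℕ → ℕ → WangTile C) : Prop :=
  (∀ i j, i < w → j < h → p i j ∈ T) ∧
    (∀ i j, i + 1 < w → j < h → (p i j).right = (p (i + 1) j).left) ∧
    (∀ i j, i < w → j + 1 < h → (p i j).top = (p i (j + 1)).bottom)

def bottomWord {C : Type*} (w : ℕ) (p : ℕ → ℕ → WangTile C) : List C :=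
  (List.range w).map fun i => (p i 0).bottom

def topWord {C : Type*} (w h : ℕ) (p : ℕ → ℕ → WangTile C) : List C :=
  (List.range w).map fun i => (p i (h - 1)).top

def leftWord {C : Type*} (h : ℕ) (p : ℕ → ℕ → WangTile C) : List C :=
  (List.range h).map fun j => (p 0 j).left

def rightWord {C : Type*} (w h : ℕ) (p : ℕ → ℕ → WangTile C) : List C :=
  (List.range h).map fun j => (p (w - 1) j).right

def tau (n : ℤ) (v : Lbl) : List Lbl :=
  if v.1 = v.2.2 then
    (0, v.1 - v.2.1 + 1, n + 1) :: List.replicate (n - v.2.2).toNat (1, 1, n + 1)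
  else
    (0, v.1 - v.2.1 + 1, n) ::
      (List.replicate (v.2.2 - v.1 - 1).toNat (1, 1, n) ++
        List.replicate (n + 1 - v.2.2).toNat (1, 1, n + 1))

/-! ### Auxiliary machinery -/

/-- Second coordinate selector used throughout. -/
def cc (x : Lbl) (k : ℤ) : ℤ := if k ≤ x.2.2 - x.1 then 0 else 1

/-- Closed form of the substitution image pattern of a tile with left label `u`
and bottom label `v`. -/
def patF (n : ℤ) (u v : Lbl) : ℕ → ℕ → WangTile Lbl
  | 0, 0 => ⟨(0, cc v 1, v.1 - v.2.1 + 1), (0, cc u 1, u.1 - u.2.1 + 1),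
             (0, u.1 - u.2.1 + 1, n + cc u 1), (0, v.1 - v.2.1 + 1, n + cc v 1)⟩
  | i+1, 0 => ⟨(0, cc v ((i:ℤ)+2), v.1 - v.2.1 + (i:ℤ) + 2), (1, 1, cc v ((i:ℤ)+1) + 1),
              (0, cc v ((i:ℤ)+1), v.1 - v.2.1 + (i:ℤ) + 1), (1, 1, n + cc v ((i:ℤ)+2))⟩
  | 0, j+1 => ⟨(1, 1, cc u ((j:ℤ)+1) + 1), (0, cc u ((j:ℤ)+2), u.1 - u.2.1 + (j:ℤ) + 2),
              (1, 1, n + cc u ((j:ℤ)+2)), (0, cc u ((j:ℤ)+1), u.1 - u.2.1 + (j:ℤ) + 1)⟩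
  | i+1, j+1 => ⟨(1, 1, cc u ((j:ℤ)+1) + (i:ℤ) + 2), (1, 1, cc v ((i:ℤ)+1) + (j:ℤ) + 2),
                (1, 1, cc u ((j:ℤ)+1) + (i:ℤ) + 1), (1, 1, cc v ((i:ℤ)+1) + (j:ℤ) + 1)⟩

/-- The unique tile of `Text n` with given left and bottom labels. -/
def mkTile (n : ℤ) (l b : Lbl) : WangTile Lbl :=
  if l.1 = 1 then
    if b.1 = 1 then ⟨(1, 1, l.2.2 + 1), (1, 1, b.2.2 + 1), l, b⟩
    else ⟨(1, 1, b.2.1 + 1), (0, l.2.2 - n, b.2.2 + 1), l, b⟩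
  else
    if b.1 = 1 then ⟨(0, b.2.2 - n, l.2.2 + 1), (1, 1, l.2.1 + 1), l, b⟩
    else ⟨(0, b.2.2 - n, b.2.1), (0, l.2.2 - n, l.2.1), l, b⟩

def tauE (n : ℤ) (x : Lbl) (k : ℕ) : Lbl := (tau n x).getD k default

lemma tau_length (n : ℤ) (hn : 1 ≤ n) (x : Lbl) (hx : x ∈ Vn n) :
    (tau n x).length = (n + 1 - x.1).toNat := by
  obtain ⟨h1, h2, h3, h4, h5⟩ := hx
  unfold tau
  split_ifs with h
  · simp only [List.length_cons, List.length_replicate]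
    omega
  · simp only [List.length_cons, List.length_append, List.length_replicate]
    omega

lemma tauE_spec (n : ℤ) (hn : 1 ≤ n) (x : Lbl) (hx : x ∈ Vn n) (k : ℕ)
    (hk : k < (n + 1 - x.1).toNat) :
    tauE n x k = if k = 0 then (0, x.1 - x.2.1 + 1, n + cc x 1)
      else (1, 1, n + cc x ((k:ℤ) + 1)) := by
  obtain ⟨h1, h2, h3, h4, h5⟩ := hx
  rcases k with _ | m
  · rw [if_pos rfl]
    unfold tauE tau
    split_ifs with h
    · rw [List.getD_cons_zero]
      have hc : cc x 1 = 1 := by unfold cc; rw [if_neg (by omega)]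
      rw [hc]
    · rw [List.getD_cons_zero]
      have hc : cc x 1 = 0 := by unfold cc; rw [if_pos (by omega)]
      rw [hc, add_zero]
  · rw [if_neg (by omega)]
    push_cast
    unfold tauE tau
    split_ifs with h
    · rw [List.getD_cons_succ, List.getD_eq_getElem?_getD, List.getElem?_replicate,
        if_pos (by omega)]
      have hc : cc x ((m:ℤ) + 1 + 1) = 1 := by unfold cc; rw [if_neg (by omega)]
      rw [hc]
      simp
    · by_cases hm : (m:ℤ) + 2 ≤ x.2.2 - x.1
      · rw [List.getD_cons_succ, List.getD_eq_getElem?_getD,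
          List.getElem?_append_left (by simp only [List.length_replicate]; omega),
          List.getElem?_replicate, if_pos (by omega)]
        have hc : cc x ((m:ℤ) + 1 + 1) = 0 := by unfold cc; rw [if_pos (by omega)]
        rw [hc]
        simp
      · rw [List.getD_cons_succ, List.getD_eq_getElem?_getD,
          List.getElem?_append_right (by simp only [List.length_replicate]; omega),
          List.getElem?_replicate, if_pos (by simp only [List.length_replicate]; omega)]
        have hc : cc x ((m:ℤ) + 1 + 1) = 1 := by unfold cc; rw [if_neg (by omega)]
        rw [hc]
        simp

lemma mem_det (n : ℤ) (t : WangTile Lbl) (ht : t ∈ Text n) :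
    mkTile n t.left t.bottom = t := by
  rcases ht with ((((((((hw | hb) | hg) | hy) | ha) | hbv) | hgv) | hyv) | hav) | hj
  · obtain ⟨i, j, _, _, _, _, rfl⟩ := hw
    simp [mkTile]
  · obtain ⟨i, _, _, rfl⟩ := hb
    simp [mkTile]
  · obtain ⟨i, _, _, rfl⟩ := hg
    simp [mkTile]
  · obtain ⟨i, _, _, rfl⟩ := hy
    simp [mkTile]
  · obtain ⟨i, _, _, rfl⟩ := ha
    simp [mkTile]
  · obtain ⟨s, ⟨i, _, _, rfl⟩, rfl⟩ := hbv
    simp [mkTile, hatT]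
  · obtain ⟨s, ⟨i, _, _, rfl⟩, rfl⟩ := hgv
    simp [mkTile, hatT]
  · obtain ⟨s, ⟨i, _, _, rfl⟩, rfl⟩ := hyv
    simp [mkTile, hatT]
  · obtain ⟨s, ⟨i, _, _, rfl⟩, rfl⟩ := hav
    simp [mkTile, hatT]
  · obtain ⟨k, l, r, s, _, _, rfl⟩ := hj
    simp [mkTile, junctionTile]

lemma map_range_get {C : Type*} [Inhabited C] {w : ℕ} {f g : ℕ → C}
    (h : (List.range w).map f = (List.range w).map g) (k : ℕ) (hk : k < w) :
    f k = g k := by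
  have := congrArg (fun L => L.getD k default) h
  simpa [List.getD_eq_getElem?_getD, List.getElem?_range hk] using this

lemma map_range_eq {C : Type*} [Inhabited C] (w : ℕ) (f : ℕ → C) (L : List C)
    (hlen : L.length = w) (h : ∀ k, k < w → f k = L.getD k default) :
    (List.range w).map f = L := by
  apply List.ext_getElem (by simpa using hlen.symm)
  intro k h1 h2
  have hk : k < w := by simpa using h1
  simp only [List.getElem_map, List.getElem_range]
  rw [h k hk, List.getD_eq_getElem?_getD, List.getElem?_eq_getElem h2]
  rfl

/-- Two valid patterns over `Text n` with the same left and bottom words agree. -/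
lemma pattern_unique (n : ℤ) (w h : ℕ) (p q : ℕ → ℕ → WangTile Lbl)
    (hp : ValidPattern (Text n) w h p) (hq : ValidPattern (Text n) w h q)
    (hl : leftWord h p = leftWord h q) (hb : bottomWord w p = bottomWord w q) :
    ∀ i j, i < w → j < h → q i j = p i j := by
  obtain ⟨hpm, hpr, hpt⟩ := hp
  obtain ⟨hqm, hqr, hqt⟩ := hq
  have key : ∀ j, j < h → ∀ i, i < w → q i j = p i j := by
    intro j
    induction j with
    | zero =>
      intro hj i
      induction i with
      | zero =>
        intro hi
        have e1 : (q 0 0).left = (p 0 0).left := (map_range_get hl 0 hj).symm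
        have e2 : (q 0 0).bottom = (p 0 0).bottom := (map_range_get hb 0 hi).symm
        rw [← mem_det n _ (hqm 0 0 hi hj), ← mem_det n _ (hpm 0 0 hi hj), e1, e2]
      | succ k ih =>
        intro hi
        have hk : k < w := by omega
        have e1 : (q (k+1) 0).left = (p (k+1) 0).left := by
          rw [← hqr k 0 hi hj, ← hpr k 0 hi hj, ih hk]
        have e2 : (q (k+1) 0).bottom = (p (k+1) 0).bottom :=
          (map_range_get hb (k+1) hi).symm
        rw [← mem_det n _ (hqm (k+1) 0 hi hj), ← mem_det n _ (hpm (k+1) 0 hi hj), e1, e2]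
    | succ m ihj =>
      intro hj i
      have hm : m < h := by omega
      induction i with
      | zero =>
        intro hi
        have e1 : (q 0 (m+1)).left = (p 0 (m+1)).left := (map_range_get hl (m+1) hj).symm
        have e2 : (q 0 (m+1)).bottom = (p 0 (m+1)).bottom := by
          rw [← hqt 0 m hi hj, ← hpt 0 m hi hj, ihj hm 0 hi]
        rw [← mem_det n _ (hqm 0 (m+1) hi hj), ← mem_det n _ (hpm 0 (m+1) hi hj), e1, e2]
      | succ k ih =>
        intro hi
        have hk : k < w := by omega
        have e1 : (q (k+1) (m+1)).left = (p (k+1) (m+1)).left := by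
          rw [← hqr k (m+1) hi hj, ← hpr k (m+1) hi hj, ih hk]
        have e2 : (q (k+1) (m+1)).bottom = (p (k+1) (m+1)).bottom := by
          rw [← hqt (k+1) m hi hj, ← hpt (k+1) m hi hj, ihj hm (k+1) hi]
        rw [← mem_det n _ (hqm (k+1) (m+1) hi hj), ← mem_det n _ (hpm (k+1) (m+1) hi hj),
          e1, e2]
  intro i j hi hj
  exact key j hj i hi

lemma mem_Text (n : ℤ) {t : WangTile Lbl}
    (h : t ∈ whiteTiles n ∨ t ∈ blueH n ∨ t ∈ greenH n ∨ t ∈ yellowH n ∨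
      t ∈ hatT '' blueH n ∨ t ∈ hatT '' greenH n ∨ t ∈ hatT '' yellowH n ∨
      t ∈ junctions n) : t ∈ Text n := by
  simp only [Text, Set.mem_union]
  tauto

lemma patF_mem (n : ℤ) (hn : 1 ≤ n) (u v : Lbl) (hu : u ∈ Vn n) (hv : v ∈ Vn n)
    (C1 : u.2.2 < n → v.1 = 1) (C2 : v.2.2 < n → u.1 = 1) :
    ∀ i j, i < (n + 1 - v.1).toNat → j < (n + 1 - u.1).toNat →
      patF n u v i j ∈ Text n := by
  obtain ⟨hu1, hu2, hu3, hu4, hu5⟩ := hu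
  obtain ⟨hv1, hv2, hv3, hv4, hv5⟩ := hv
  intro i j hi hj
  rcases i with _ | i <;> rcases j with _ | j
  · -- junction tile
    apply mem_Text n (Or.inr (Or.inr (Or.inr (Or.inr (Or.inr (Or.inr (Or.inr ?_)))))))
    refine ⟨cc v 1, v.1 - v.2.1 + 1, cc u 1, u.1 - u.2.1 + 1, ?_, ?_, ?_⟩
    · simp only [jPairs, Set.mem_insert_iff, Set.mem_singleton_iff, Prod.mk.injEq, cc]
      split_ifs <;> omega
    · simp only [jPairs, Set.mem_insert_iff, Set.mem_singleton_iff, Prod.mk.injEq, cc]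
      split_ifs <;> omega
    · simp only [patF, junctionTile, cc, WangTile.mk.injEq, Prod.mk.injEq, true_and,
        and_true]
      split_ifs <;> omega
  · -- vertical tile at (0, j+1)
    by_cases h1 : ((j:ℤ)+1) ≤ u.2.2 - u.1 <;> by_cases h2 : ((j:ℤ)+2) ≤ u.2.2 - u.1
    · -- blue hat
      apply mem_Text n (Or.inr (Or.inr (Or.inr (Or.inr (Or.inl ?_)))))
      refine ⟨⟨(0, 0, (u.1 - u.2.1 + (j:ℤ) + 1) + 1), (1, 1, 1),
        (0, 0, u.1 - u.2.1 + (j:ℤ) + 1), (1, 1, n)⟩, ⟨u.1 - u.2.1 + (j:ℤ) + 1,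
        by omega, by omega, rfl⟩, ?_⟩
      simp only [patF, hatT, cc, WangTile.mk.injEq, Prod.mk.injEq, true_and, and_true]
      split_ifs <;> omega
    · -- green hat
      apply mem_Text n (Or.inr (Or.inr (Or.inr (Or.inr (Or.inr (Or.inl ?_))))))
      refine ⟨⟨(0, 1, (u.1 - u.2.1 + (j:ℤ) + 1) + 1), (1, 1, 1),
        (0, 0, u.1 - u.2.1 + (j:ℤ) + 1), (1, 1, n + 1)⟩, ⟨u.1 - u.2.1 + (j:ℤ) + 1,
        by omega, by omega, rfl⟩, ?_⟩
      simp only [patF, hatT, cc, WangTile.mk.injEq, Prod.mk.injEq, true_and, and_true]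
      split_ifs <;> omega
    · omega
    · -- yellow hat
      apply mem_Text n (Or.inr (Or.inr (Or.inr (Or.inr (Or.inr (Or.inr (Or.inl ?_)))))))
      refine ⟨⟨(0, 1, (u.1 - u.2.1 + (j:ℤ) + 1) + 1), (1, 1, 2),
        (0, 1, u.1 - u.2.1 + (j:ℤ) + 1), (1, 1, n + 1)⟩, ⟨u.1 - u.2.1 + (j:ℤ) + 1,
        by omega, by omega, rfl⟩, ?_⟩
      simp only [patF, hatT, cc, WangTile.mk.injEq, Prod.mk.injEq, true_and, and_true]
      split_ifs <;> omega
  · -- horizontal tile at (i+1, 0)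
    by_cases h1 : ((i:ℤ)+1) ≤ v.2.2 - v.1 <;> by_cases h2 : ((i:ℤ)+2) ≤ v.2.2 - v.1
    · -- blue
      apply mem_Text n (Or.inr (Or.inl ?_))
      refine ⟨v.1 - v.2.1 + (i:ℤ) + 1, by omega, by omega, ?_⟩
      simp only [patF, cc, WangTile.mk.injEq, Prod.mk.injEq, true_and, and_true]
      split_ifs <;> omega
    · -- green
      apply mem_Text n (Or.inr (Or.inr (Or.inl ?_)))
      refine ⟨v.1 - v.2.1 + (i:ℤ) + 1, by omega, by omega, ?_⟩
      simp only [patF, cc, WangTile.mk.injEq, Prod.mk.injEq, true_and, and_true]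
      split_ifs <;> omega
    · omega
    · -- yellow
      apply mem_Text n (Or.inr (Or.inr (Or.inr (Or.inl ?_))))
      refine ⟨v.1 - v.2.1 + (i:ℤ) + 1, by omega, by omega, ?_⟩
      simp only [patF, cc, WangTile.mk.injEq, Prod.mk.injEq, true_and, and_true]
      split_ifs <;> omega
  · -- white tile at (i+1, j+1)
    apply mem_Text n (Or.inl ?_)
    by_cases h1 : ((j:ℤ)+1) ≤ u.2.2 - u.1 <;> by_cases h2 : ((i:ℤ)+1) ≤ v.2.2 - v.1
    · refine ⟨(i:ℤ) + 1, (j:ℤ) + 1, by omega, by omega, by omega, by omega, ?_⟩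
      simp only [patF, cc, WangTile.mk.injEq, Prod.mk.injEq, true_and, and_true]
      split_ifs <;> omega
    · refine ⟨(i:ℤ) + 1, (j:ℤ) + 2, by omega, by omega, by omega, by omega, ?_⟩
      simp only [patF, cc, WangTile.mk.injEq, Prod.mk.injEq, true_and, and_true]
      split_ifs <;> omega
    · refine ⟨(i:ℤ) + 2, (j:ℤ) + 1, by omega, by omega, by omega, by omega, ?_⟩
      simp only [patF, cc, WangTile.mk.injEq, Prod.mk.injEq, true_and, and_true]
      split_ifs <;> omega
    · refine ⟨(i:ℤ) + 2, (j:ℤ) + 2, by omega, by omega, by omega, by omega, ?_⟩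
      simp only [patF, cc, WangTile.mk.injEq, Prod.mk.injEq, true_and, and_true]
      split_ifs <;> omega

lemma tau_pos (n : ℤ) (x : Lbl) : 0 < (tau n x).length := by
  unfold tau; split_ifs <;> simp

lemma patF_adjR (n : ℤ) (u v : Lbl) (i j : ℕ) :
    (patF n u v i j).right = (patF n u v (i+1) j).left := by
  rcases i with _ | i <;> rcases j with _ | j <;>
    simp only [patF, cc, Prod.mk.injEq, true_and, and_true] <;> push_cast <;>
    first
    | (split_ifs <;> omega)
    | omega
    | rfl

lemma patF_adjT (n : ℤ) (u v : Lbl) (i j : ℕ) :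
    (patF n u v i j).top = (patF n u v i (j+1)).bottom := by
  rcases i with _ | i <;> rcases j with _ | j <;>
    simp only [patF, cc, Prod.mk.injEq, true_and, and_true] <;> push_cast <;>
    first
    | (split_ifs <;> omega)
    | omega
    | rfl

lemma patF_bottomWord (n : ℤ) (hn : 1 ≤ n) (u v : Lbl) (hu : u ∈ Vn n) (hv : v ∈ Vn n) :
    bottomWord (tau n v).length (patF n u v) = tau n v := by
  apply map_range_eq _ _ _ rfl
  intro k hk
  rw [tau_length n hn v hv] at hk
  rw [show (tau n v).getD k default = tauE n v k from rfl, tauE_spec n hn v hv k hk]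
  rcases k with _ | m
  · rw [if_pos rfl]; simp only [patF]
  · rw [if_neg (by omega)]
    simp only [patF, cc, Prod.mk.injEq, true_and, and_true]
    push_cast
    split_ifs <;> omega

lemma patF_leftWord (n : ℤ) (hn : 1 ≤ n) (u v : Lbl) (hu : u ∈ Vn n) (hv : v ∈ Vn n) :
    leftWord (tau n u).length (patF n u v) = tau n u := by
  apply map_range_eq _ _ _ rfl
  intro k hk
  rw [tau_length n hn u hu] at hk
  rw [show (tau n u).getD k default = tauE n u k from rfl, tauE_spec n hn u hu k hk]
  rcases k with _ | m
  · rw [if_pos rfl]; simp only [patF]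
  · rw [if_neg (by omega)]
    simp only [patF, cc, Prod.mk.injEq, true_and, and_true]
    push_cast
    split_ifs <;> omega

lemma patF_topWord (n : ℤ) (hn : 1 ≤ n) (u v β : Lbl) (hu : u ∈ Vn n) (hv : v ∈ Vn n)
    (hβ : β ∈ Vn n) (hβ1 : β.1 = v.1)
    (A1 : β.1 - β.2.1 + 1 = cc u (n + 1 - u.1))
    (A2 : n + cc β 1 = u.1 - u.2.1 + (n + 1 - u.1))
    (B : ∀ i : ℤ, 1 ≤ i → i ≤ n - v.1 → n + cc β (i + 1) = cc v i + (n + 1 - u.1)) :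
    topWord (tau n v).length (tau n u).length (patF n u v) = tau n β := by
  have hwl := tau_length n hn v hv
  have hhl := tau_length n hn u hu
  obtain ⟨hu1, hu2, hu3, hu4, hu5⟩ := hu
  obtain ⟨hv1, hv2, hv3, hv4, hv5⟩ := hv
  obtain ⟨hb1, hb2, hb3, hb4, hb5⟩ := id hβ
  apply map_range_eq _ _ _ (by rw [tau_length n hn β hβ, hwl, hβ1])
  intro k hk
  have hk' : k < (n + 1 - β.1).toNat := by rw [hβ1]; omega
  rw [show (tau n β).getD k default = tauE n β k from rfl, tauE_spec n hn β hβ k hk']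
  rcases hd : (tau n u).length - 1 with _ | m <;> rcases k with _ | i
  · rw [if_pos rfl]
    simp only [patF, cc, Prod.mk.injEq, true_and, and_true] at A1 A2 ⊢
    split_ifs at A1 A2 ⊢ <;> omega
  · rw [if_neg (by omega)]
    have hB := B ((i:ℤ) + 1) (by omega) (by omega)
    simp only [patF, cc, Prod.mk.injEq, true_and, and_true] at hB ⊢
    push_cast at hB ⊢
    split_ifs at hB ⊢ <;> omega
  · rw [if_pos rfl]
    simp only [patF, cc, Prod.mk.injEq, true_and, and_true] at A1 A2 ⊢
    push_cast at A1 A2 ⊢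
    split_ifs at A1 A2 ⊢ <;> omega
  · rw [if_neg (by omega)]
    have hB := B ((i:ℤ) + 1) (by omega) (by omega)
    simp only [patF, cc, Prod.mk.injEq, true_and, and_true] at hB ⊢
    push_cast at hB ⊢
    split_ifs at hB ⊢ <;> omega

lemma patF_rightWord (n : ℤ) (hn : 1 ≤ n) (u v α : Lbl) (hu : u ∈ Vn n) (hv : v ∈ Vn n)
    (hα : α ∈ Vn n) (hα1 : α.1 = u.1)
    (A1 : α.1 - α.2.1 + 1 = cc v (n + 1 - v.1))
    (A2 : n + cc α 1 = v.1 - v.2.1 + (n + 1 - v.1))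
    (B : ∀ j : ℤ, 1 ≤ j → j ≤ n - u.1 → n + cc α (j + 1) = cc u j + (n + 1 - v.1)) :
    rightWord (tau n v).length (tau n u).length (patF n u v) = tau n α := by
  have hwl := tau_length n hn v hv
  have hhl := tau_length n hn u hu
  obtain ⟨hu1, hu2, hu3, hu4, hu5⟩ := hu
  obtain ⟨hv1, hv2, hv3, hv4, hv5⟩ := hv
  obtain ⟨ha1, ha2, ha3, ha4, ha5⟩ := id hα
  apply map_range_eq _ _ _ (by rw [tau_length n hn α hα, hhl, hα1])
  intro k hk
  have hk' : k < (n + 1 - α.1).toNat := by rw [hα1]; omega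
  rw [show (tau n α).getD k default = tauE n α k from rfl, tauE_spec n hn α hα k hk']
  rcases hd : (tau n v).length - 1 with _ | m <;> rcases k with _ | i
  · rw [if_pos rfl]
    simp only [patF, cc, Prod.mk.injEq, true_and, and_true] at A1 A2 ⊢
    split_ifs at A1 A2 ⊢ <;> omega
  · rw [if_neg (by omega)]
    have hB := B ((i:ℤ) + 1) (by omega) (by omega)
    simp only [patF, cc, Prod.mk.injEq, true_and, and_true] at hB ⊢
    push_cast at hB ⊢
    split_ifs at hB ⊢ <;> omega
  · rw [if_pos rfl]
    simp only [patF, cc, Prod.mk.injEq, true_and, and_true] at A1 A2 ⊢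
    push_cast at A1 A2 ⊢
    split_ifs at A1 A2 ⊢ <;> omega
  · rw [if_neg (by omega)]
    have hB := B ((i:ℤ) + 1) (by omega) (by omega)
    simp only [patF, cc, Prod.mk.injEq, true_and, and_true] at hB ⊢
    push_cast at hB ⊢
    split_ifs at hB ⊢ <;> omega

lemma main_all (n : ℤ) (hn : 1 ≤ n) (α β u v : Lbl)
    (hu : u ∈ Vn n) (hv : v ∈ Vn n) (hα : α ∈ Vn n) (hβ : β ∈ Vn n)
    (hα1 : α.1 = u.1) (hβ1 : β.1 = v.1)
    (C1 : u.2.2 < n → v.1 = 1) (C2 : v.2.2 < n → u.1 = 1)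
    (RA1 : α.1 - α.2.1 + 1 = cc v (n + 1 - v.1))
    (RA2 : n + cc α 1 = v.1 - v.2.1 + (n + 1 - v.1))
    (RB : ∀ j : ℤ, 1 ≤ j → j ≤ n - u.1 → n + cc α (j + 1) = cc u j + (n + 1 - v.1))
    (TA1 : β.1 - β.2.1 + 1 = cc u (n + 1 - u.1))
    (TA2 : n + cc β 1 = u.1 - u.2.1 + (n + 1 - u.1))
    (TB : ∀ i : ℤ, 1 ≤ i → i ≤ n - v.1 → n + cc β (i + 1) = cc v i + (n + 1 - u.1)) :
    ∃ (w h : ℕ) (p : ℕ → ℕ → WangTile Lbl),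
      1 ≤ w ∧ 1 ≤ h ∧ ValidPattern (Text n) w h p ∧
      rightWord w h p = tau n α ∧ topWord w h p = tau n β ∧
      leftWord h p = tau n u ∧ bottomWord w p = tau n v ∧
      ∀ (w' h' : ℕ) (q : ℕ → ℕ → WangTile Lbl),
        1 ≤ w' → 1 ≤ h' → ValidPattern (Text n) w' h' q →
        rightWord w' h' q = tau n α → topWord w' h' q = tau n β →
        leftWord h' q = tau n u → bottomWord w' q = tau n v →
        w' = w ∧ h' = h ∧ ∀ i j, i < w → j < h → q i j = p i j := by
  have hvalid : ValidPattern (Text n) (tau n v).length (tau n u).length (patF n u v) := by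
    refine ⟨?_, fun i j _ _ => patF_adjR n u v i j, fun i j _ _ => patF_adjT n u v i j⟩
    intro i j hi hj
    exact patF_mem n hn u v hu hv C1 C2 i j
      (by rwa [tau_length n hn v hv] at hi) (by rwa [tau_length n hn u hu] at hj)
  refine ⟨(tau n v).length, (tau n u).length, patF n u v, tau_pos n v, tau_pos n u,
    hvalid, patF_rightWord n hn u v α hu hv hα hα1 RA1 RA2 RB,
    patF_topWord n hn u v β hu hv hβ hβ1 TA1 TA2 TB,
    patF_leftWord n hn u v hu hv, patF_bottomWord n hn u v hu hv, ?_⟩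
  intro w' h' q hw' hh' hq hrq htq hlq hbq
  have hw : w' = (tau n v).length := by
    have := congrArg List.length hbq
    simpa [bottomWord] using this
  have hh : h' = (tau n u).length := by
    have := congrArg List.length hlq
    simpa [leftWord] using this
  subst hw hh
  refine ⟨rfl, rfl, ?_⟩
  exact pattern_unique n _ _ (patF n u v) q hvalid hq
    (by rw [patF_leftWord n hn u v hu hv, hlq])
    (by rw [patF_bottomWord n hn u v hu hv, hbq])

/-- existence and uniqueness of the valid rectangular pattern over `T'_n`
with boundary words `τ_n(α), τ_n(β), τ_n(u), τ_n(v)`, for each tile `(α,β,u,v) ∈ T'_n`. -/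
theorem stmt4 (n : ℤ) (hn : 1 ≤ n) (α β u v : Lbl)
    (ht : (⟨α, β, u, v⟩ : WangTile Lbl) ∈ Text n) :
    ∃ (w h : ℕ) (p : ℕ → ℕ → WangTile Lbl),
      1 ≤ w ∧ 1 ≤ h ∧ ValidPattern (Text n) w h p ∧
      rightWord w h p = tau n α ∧ topWord w h p = tau n β ∧
      leftWord h p = tau n u ∧ bottomWord w p = tau n v ∧
      ∀ (w' h' : ℕ) (q : ℕ → ℕ → WangTile Lbl),
        1 ≤ w' → 1 ≤ h' → ValidPattern (Text n) w' h' q →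
        rightWord w' h' q = tau n α → topWord w' h' q = tau n β →
        leftWord h' q = tau n u → bottomWord w' q = tau n v →
        w' = w ∧ h' = h ∧ ∀ i j, i < w → j < h → q i j = p i j := by
  rcases ht with ((((((((hw | hb) | hg) | hy) | ha) | hbv) | hgv) | hyv) | hav) | hj
  · obtain ⟨i, j, hi1, hi2, hj1, hj2, heq⟩ := hw
    injection heq with e1 e2 e3 e4
    subst e1 e2 e3 e4
    refine main_all n hn _ _ _ _ ?_ ?_ ?_ ?_ ?_ ?_ ?_ ?_ ?_ ?_ ?_ ?_ ?_ ?_ <;>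
      first
      | rfl
      | (simp only [Vn, Set.mem_setOf_eq]; omega)
      | omega
      | (simp only [cc]; split_ifs <;> omega)
      | (intro z hz1 hz2; simp only [cc]; split_ifs <;> omega)
  · obtain ⟨i, hi1, hi2, heq⟩ := hb
    injection heq with e1 e2 e3 e4
    subst e1 e2 e3 e4
    refine main_all n hn _ _ _ _ ?_ ?_ ?_ ?_ ?_ ?_ ?_ ?_ ?_ ?_ ?_ ?_ ?_ ?_ <;>
      first
      | rfl
      | (simp only [Vn, Set.mem_setOf_eq]; omega)
      | omega
      | (simp only [cc]; split_ifs <;> omega)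
      | (intro z hz1 hz2; simp only [cc]; split_ifs <;> omega)
  · obtain ⟨i, hi1, hi2, heq⟩ := hg
    injection heq with e1 e2 e3 e4
    subst e1 e2 e3 e4
    refine main_all n hn _ _ _ _ ?_ ?_ ?_ ?_ ?_ ?_ ?_ ?_ ?_ ?_ ?_ ?_ ?_ ?_ <;>
      first
      | rfl
      | (simp only [Vn, Set.mem_setOf_eq]; omega)
      | omega
      | (simp only [cc]; split_ifs <;> omega)
      | (intro z hz1 hz2; simp only [cc]; split_ifs <;> omega)
  · obtain ⟨i, hi1, hi2, heq⟩ := hy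
    injection heq with e1 e2 e3 e4
    subst e1 e2 e3 e4
    refine main_all n hn _ _ _ _ ?_ ?_ ?_ ?_ ?_ ?_ ?_ ?_ ?_ ?_ ?_ ?_ ?_ ?_ <;>
      first
      | rfl
      | (simp only [Vn, Set.mem_setOf_eq]; omega)
      | omega
      | (simp only [cc]; split_ifs <;> omega)
      | (intro z hz1 hz2; simp only [cc]; split_ifs <;> omega)
  · obtain ⟨i, hi1, hi2, heq⟩ := ha
    injection heq with e1 e2 e3 e4
    subst e1 e2 e3 e4
    refine main_all n hn _ _ _ _ ?_ ?_ ?_ ?_ ?_ ?_ ?_ ?_ ?_ ?_ ?_ ?_ ?_ ?_ <;>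
      first
      | rfl
      | (simp only [Vn, Set.mem_setOf_eq]; omega)
      | omega
      | (simp only [cc]; split_ifs <;> omega)
      | (intro z hz1 hz2; simp only [cc]; split_ifs <;> omega)
  · obtain ⟨s, ⟨i, hi1, hi2, rfl⟩, heq⟩ := hbv
    simp only [hatT] at heq
    injection heq with e1 e2 e3 e4
    subst e1 e2 e3 e4
    refine main_all n hn _ _ _ _ ?_ ?_ ?_ ?_ ?_ ?_ ?_ ?_ ?_ ?_ ?_ ?_ ?_ ?_ <;>
      first
      | rfl
      | (simp only [Vn, Set.mem_setOf_eq]; omega)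
      | omega
      | (simp only [cc]; split_ifs <;> omega)
      | (intro z hz1 hz2; simp only [cc]; split_ifs <;> omega)
  · obtain ⟨s, ⟨i, hi1, hi2, rfl⟩, heq⟩ := hgv
    simp only [hatT] at heq
    injection heq with e1 e2 e3 e4
    subst e1 e2 e3 e4
    refine main_all n hn _ _ _ _ ?_ ?_ ?_ ?_ ?_ ?_ ?_ ?_ ?_ ?_ ?_ ?_ ?_ ?_ <;>
      first
      | rfl
      | (simp only [Vn, Set.mem_setOf_eq]; omega)
      | omega
      | (simp only [cc]; split_ifs <;> omega)
      | (intro z hz1 hz2; simp only [cc]; split_ifs <;> omega)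
  · obtain ⟨s, ⟨i, hi1, hi2, rfl⟩, heq⟩ := hyv
    simp only [hatT] at heq
    injection heq with e1 e2 e3 e4
    subst e1 e2 e3 e4
    refine main_all n hn _ _ _ _ ?_ ?_ ?_ ?_ ?_ ?_ ?_ ?_ ?_ ?_ ?_ ?_ ?_ ?_ <;>
      first
      | rfl
      | (simp only [Vn, Set.mem_setOf_eq]; omega)
      | omega
      | (simp only [cc]; split_ifs <;> omega)
      | (intro z hz1 hz2; simp only [cc]; split_ifs <;> omega)
  · obtain ⟨s, ⟨i, hi1, hi2, rfl⟩, heq⟩ := hav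
    simp only [hatT] at heq
    injection heq with e1 e2 e3 e4
    subst e1 e2 e3 e4
    refine main_all n hn _ _ _ _ ?_ ?_ ?_ ?_ ?_ ?_ ?_ ?_ ?_ ?_ ?_ ?_ ?_ ?_ <;>
      first
      | rfl
      | (simp only [Vn, Set.mem_setOf_eq]; omega)
      | omega
      | (simp only [cc]; split_ifs <;> omega)
      | (intro z hz1 hz2; simp only [cc]; split_ifs <;> omega)
  · obtain ⟨k, l, r, s, hkl, hrs, heq⟩ := hj
    simp only [jPairs, Set.mem_insert_iff, Set.mem_singleton_iff, Prod.mk.injEq] at hkl hrs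
    simp only [junctionTile] at heq
    injection heq with e1 e2 e3 e4
    subst e1 e2 e3 e4
    refine main_all n hn _ _ _ _ ?_ ?_ ?_ ?_ ?_ ?_ ?_ ?_ ?_ ?_ ?_ ?_ ?_ ?_ <;>
      first
      | rfl
      | (simp only [Vn, Set.mem_setOf_eq]; omega)
      | omega
      | (simp only [cc]; split_ifs <;> omega)
      | (intro z hz1 hz2; simp only [cc]; split_ifs <;> omega)
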